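/- A simple complete multipartite graph is planar if and only if it is isomorphic to one of: K_{1,1,1,2}, K_4, K_{2,2,2}, K_{1,2,2}, K_{1,1,n}, K_{2,n}, or K_{1,n} for some natural number n ≥ 1. -/

import Mathlib

open SimpleGraph

/-- `H` is a minor of `G`: disjoint nonempty connected branch sets with edges
between the branch sets of adjacent vertices of `H`. -/
def GraphMinor {W V : Type} (H : SimpleGraph W) (G : SimpleGraph V) : Prop :=
  ∃ f : W → Set V,
    (∀ w, (f w).Nonempty) ∧
    (∀ w, (G.induce (f w)).Connected) ∧
    (∀ w w', w ≠ w' → Disjoint (f w) (f w')) ∧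
    (∀ w w', H.Adj w w' → ∃ x ∈ f w, ∃ y ∈ f w', G.Adj x y)

/-- A graph is planar iff it has no `K₅` minor and no `K_{3,3}` minor (Wagner's theorem). -/
def IsPlanar {V : Type} (G : SimpleGraph V) : Prop :=
  ¬ GraphMinor (completeGraph (Fin 5)) G ∧
  ¬ GraphMinor (completeBipartiteGraph (Fin 3) (Fin 3)) G

/-- A triangulation on the sphere: a maximal planar graph with at least 4 vertices. -/
def IsSphereTriangulation {V : Type} (T : SimpleGraph V) : Prop :=
  4 ≤ Nat.card V ∧ IsPlanar T ∧
    ∀ u v : V, u ≠ v → ¬ T.Adj u v →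
      ¬ IsPlanar (T ⊔ SimpleGraph.fromRel (fun a b => a = u ∧ b = v))

/-- The complete tripartite graph `K_{a,b,c}`. -/
def KP3 (a b c : ℕ) : SimpleGraph (Fin a ⊕ Fin b ⊕ Fin c) :=
  (completeGraph (Fin 3)).comap
    (Sum.elim (fun _ => 0) (Sum.elim (fun _ => 1) (fun _ => 2)))

/-- The complete 4-partite graph `K_{a,b,c,d}`. -/
def KP4 (a b c d : ℕ) : SimpleGraph (Fin a ⊕ Fin b ⊕ Fin c ⊕ Fin d) :=
  (completeGraph (Fin 4)).comap
    (Sum.elim (fun _ => 0) (Sum.elim (fun _ => 1) (Sum.elim (fun _ => 2) (fun _ => 3))))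

section Basic

variable {W V V' : Type} {H : SimpleGraph W} {G : SimpleGraph V} {G' : SimpleGraph V'}

lemma connected_induce_singleton (G : SimpleGraph V) (a : V) :
    (G.induce {a}).Connected := by
  rw [connected_iff]
  refine ⟨fun x y => ?_, ⟨⟨a, rfl⟩⟩⟩
  have : x = y := Subtype.ext (x.2.trans y.2.symm)
  exact this ▸ Reachable.refl x

lemma connected_induce_pair (G : SimpleGraph V) {a b : V} (hab : G.Adj a b) :
    (G.induce {a, b}).Connected := by
  rw [connected_iff]
  refine ⟨fun x y => ?_, ⟨⟨a, Or.inl rfl⟩⟩⟩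
  have key : ∀ z : ({a, b} : Set V),
      (G.induce {a, b}).Reachable ⟨a, Or.inl rfl⟩ z := by
    rintro ⟨z, hz | hz⟩
    · subst hz; exact Reachable.refl _
    · subst hz
      exact Adj.reachable (by simpa using hab)
  exact (key x).symm.trans (key y)

lemma graphMinor_of_injective (x : W → V) (hinj : Function.Injective x)
    (hadj : ∀ w w', H.Adj w w' → G.Adj (x w) (x w')) : GraphMinor H G := by
  refine ⟨fun w => {x w}, fun w => ⟨x w, rfl⟩,
    fun w => connected_induce_singleton G (x w), fun w w' h => ?_,
    fun w w' h => ⟨x w, rfl, x w', rfl, hadj _ _ h⟩⟩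
  simpa [Set.disjoint_singleton] using fun e => h (hinj e)

lemma GraphMinor.card_le [Fintype W] [Fintype V] (h : GraphMinor H G) :
    Fintype.card W ≤ Fintype.card V := by
  obtain ⟨f, hne, -, hdisj, -⟩ := h
  choose x hx using hne
  refine Fintype.card_le_of_injective x fun w w' he => ?_
  by_contra hww
  exact Set.disjoint_left.mp (hdisj w w' hww) (hx w) (he ▸ hx w')

lemma GraphMinor.embeds [Fintype W] [Fintype V] (h : GraphMinor H G)
    (hcard : Fintype.card V ≤ Fintype.card W) :
    ∃ x : W → V, Function.Injective x ∧
      ∀ w w', H.Adj w w' → G.Adj (x w) (x w') := by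
  obtain ⟨f, hne, -, hdisj, hadj⟩ := h
  choose x hx using hne
  have hinj : Function.Injective x := by
    intro w w' he
    by_contra hww
    exact Set.disjoint_left.mp (hdisj w w' hww) (hx w) (he ▸ hx w')
  have hsurj : Function.Surjective x := by
    have : Fintype.card W = Fintype.card V :=
      le_antisymm (Fintype.card_le_of_injective x hinj) hcard
    exact ((Fintype.bijective_iff_injective_and_card x).2 ⟨hinj, this⟩).2
  have hsingle : ∀ w, ∀ y ∈ f w, y = x w := by
    intro w y hy
    obtain ⟨w', hw'⟩ := hsurj y
    rcases eq_or_ne w' w with rfl | hww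
    · exact hw'.symm
    · exact absurd hy (Set.disjoint_left.mp (hdisj w' w hww) (hw' ▸ hx w'))
  refine ⟨x, hinj, fun w w' hA => ?_⟩
  obtain ⟨a, ha, b, hb, hab⟩ := hadj w w' hA
  rwa [hsingle w a ha, hsingle w' b hb] at hab

lemma GraphMinor.of_iso (e : G ≃g G') (h : GraphMinor H G) : GraphMinor H G' := by
  obtain ⟨f, h1, h2, h3, h4⟩ := h
  refine ⟨fun w => e '' f w, fun w => (h1 w).image e, fun w => ?_, fun w w' hw => ?_,
    fun w w' hA => ?_⟩
  · have iso : G.induce (f w) ≃g G'.induce (e '' f w) :=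
      ⟨e.toEquiv.image (f w), by
        rintro ⟨a, ha⟩ ⟨b, hb⟩
        exact e.map_rel_iff⟩
    exact iso.connected_iff.mp (h2 w)
  · exact (Set.disjoint_image_iff e.toEquiv.injective).2 (h3 w w' hw)
  · obtain ⟨a, ha, b, hb, hab⟩ := h4 w w' hA
    exact ⟨e a, Set.mem_image_of_mem _ ha, e b, Set.mem_image_of_mem _ hb,
      e.map_rel_iff.mpr hab⟩


end Basic

section NoMinor

open scoped Classical
variable {V : Type} {G : SimpleGraph V}

/-- at most `k` branch sets can contain a vertex with color `≠ top`. -/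
private lemma card_notP_le {m : ℕ} {W : Type} [Fintype W] (c : V → Fin (m+1))
    (hT : ∀ u v, c u = c v → c u ≠ Fin.last m → u = v)
    (f : W → Set V) (hdisj : ∀ w w', w ≠ w' → Disjoint (f w) (f w')) :
    Fintype.card {w : W // ¬ ∀ y ∈ f w, c y = Fin.last m} ≤ m := by
  classical
  have hch : ∀ w : {w : W // ¬ ∀ y ∈ f w, c y = Fin.last m},
      ∃ y, y ∈ f w.1 ∧ c y ≠ Fin.last m := by
    intro w
    have := w.2
    push_neg at this
    exact this
  choose y hy hy3 using hch
  have hinj : Function.Injective fun w : {w : W // ¬ ∀ y ∈ f w, c y = Fin.last m} =>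
      (⟨c (y w), hy3 w⟩ : {z : Fin (m+1) // z ≠ Fin.last m}) := by
    intro w w' he
    simp only [Subtype.mk.injEq] at he
    have hyy : y w = y w' := hT _ _ he (hy3 w)
    by_contra hne'
    have hww : w.1 ≠ w'.1 := fun h => hne' (Subtype.ext h)
    exact Set.disjoint_left.mp (hdisj _ _ hww) (hy w) (hyy ▸ hy w')
  have := Fintype.card_le_of_injective _ hinj
  have hcard : Fintype.card {z : Fin (m+1) // z ≠ Fin.last m} = m := by
    have h1 : Fintype.card {z : Fin (m+1) // z = Fin.last m} = 1 :=
      Fintype.card_subtype_eq _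
    have h2 := Fintype.card_subtype_compl (fun z : Fin (m+1) => z = Fin.last m)
    simp only [h1, Fintype.card_fin] at h2
    simpa using h2
  omega

private lemma card_P_ge {m : ℕ} {W : Type} [Fintype W] (c : V → Fin (m+1))
    (hT : ∀ u v, c u = c v → c u ≠ Fin.last m → u = v)
    (f : W → Set V) (hdisj : ∀ w w', w ≠ w' → Disjoint (f w) (f w')) :
    Fintype.card W - m ≤ Fintype.card {w : W // ∀ y ∈ f w, c y = Fin.last m} := by
  classical
  have h1 := card_notP_le c hT f hdisj
  have h2 := Fintype.card_subtype_compl (fun w : W => ∀ y ∈ f w, c y = Fin.last m)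
  have h3 : Fintype.card {w : W // ∀ y ∈ f w, c y = Fin.last m} ≤ Fintype.card W :=
    Fintype.card_le_of_injective Subtype.val Subtype.val_injective
  omega

/-- No K5 minor when there is an independent color class and ≤ 3 other vertices. -/
lemma noK5_indep (c : V → Fin 4)
    (hS : ∀ u v, c u = 3 → c v = 3 → ¬ G.Adj u v)
    (hT : ∀ u v, c u = c v → c u ≠ 3 → u = v) :
    ¬ GraphMinor (completeGraph (Fin 5)) G := by
  classical
  rintro ⟨f, hne, -, hdisj, hadj⟩
  have h3 : (3 : Fin 4) = Fin.last 3 := rfl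
  rw [h3] at hS hT
  have hge := card_P_ge c hT f hdisj
  simp only [Fintype.card_fin] at hge
  have : 1 < Fintype.card {w : Fin 5 // ∀ y ∈ f w, c y = Fin.last 3} := by omega
  obtain ⟨w1, w2, hne12⟩ := Fintype.exists_pair_of_one_lt_card this
  have hww : w1.1 ≠ w2.1 := fun h => hne12 (Subtype.ext h)
  obtain ⟨a, ha, b, hb, hab⟩ := hadj w1.1 w2.1 hww
  exact hS a b (w1.2 a ha) (w2.2 b hb) hab

/-- No K33 minor when there is an independent color class and ≤ 2 other vertices. -/
lemma noK33_indep (c : V → Fin 3)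
    (hS : ∀ u v, c u = 2 → c v = 2 → ¬ G.Adj u v)
    (hT : ∀ u v, c u = c v → c u ≠ 2 → u = v) :
    ¬ GraphMinor (completeBipartiteGraph (Fin 3) (Fin 3)) G := by
  classical
  rintro ⟨f, hne, -, hdisj, hadj⟩
  have h2 : (2 : Fin 3) = Fin.last 2 := rfl
  rw [h2] at hS hT
  have hle := card_notP_le c hT f hdisj
  -- find a good inl and a good inr
  have hgl : ∃ a : Fin 3, ∀ y ∈ f (Sum.inl a), c y = Fin.last 2 := by
    by_contra hno
    push_neg at hno
    have hinj : Function.Injective fun a : Fin 3 =>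
        (⟨Sum.inl a, by obtain ⟨y, hy, hy2⟩ := hno a; intro hall; exact hy2 (hall y hy)⟩ :
          {w : Fin 3 ⊕ Fin 3 // ¬ ∀ y ∈ f w, c y = Fin.last 2}) := by
      intro a b hab
      simpa [Subtype.mk.injEq] using hab
    have := Fintype.card_le_of_injective _ hinj
    simp only [Fintype.card_fin] at this
    omega
  have hgr : ∃ b : Fin 3, ∀ y ∈ f (Sum.inr b), c y = Fin.last 2 := by
    by_contra hno
    push_neg at hno
    have hinj : Function.Injective fun a : Fin 3 =>
        (⟨Sum.inr a, by obtain ⟨y, hy, hy2⟩ := hno a; intro hall; exact hy2 (hall y hy)⟩ :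
          {w : Fin 3 ⊕ Fin 3 // ¬ ∀ y ∈ f w, c y = Fin.last 2}) := by
      intro a b hab
      simpa [Subtype.mk.injEq] using hab
    have := Fintype.card_le_of_injective _ hinj
    simp only [Fintype.card_fin] at this
    omega
  obtain ⟨a, hga⟩ := hgl
  obtain ⟨b, hgb⟩ := hgr
  obtain ⟨u, hu, v, hv, huv⟩ := hadj (Sum.inl a) (Sum.inr b) (by simp)
  exact hS u v (hga u hu) (hgb v hv) huv
end NoMinor

section Small
open scoped Classical
variable {V : Type} {G : SimpleGraph V}

lemma noK5_smallcolor {m : ℕ} [Fintype V] (c : V → Fin m)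
    (hc : ∀ u v, G.Adj u v → c u ≠ c v) (hm : m ≤ 4) (hcard : Fintype.card V ≤ 5) :
    ¬ GraphMinor (completeGraph (Fin 5)) G := by
  intro h
  obtain ⟨x, hinj, hadj⟩ := h.embeds (by simpa using hcard)
  have hinj2 : Function.Injective (fun w => c (x w)) := by
    intro w w' he
    by_contra hne
    exact hc _ _ (hadj w w' hne) he
  have := Fintype.card_le_of_injective _ hinj2
  simp only [Fintype.card_fin] at this
  omega

lemma noK5_3color [Fintype V] (c : V → Fin 3)
    (hc : ∀ u v, G.Adj u v → c u ≠ c v) (hcard : Fintype.card V ≤ 6) :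
    ¬ GraphMinor (completeGraph (Fin 5)) G := by
  rintro ⟨f, hne, -, hdisj, hadj⟩
  choose x hx using hne
  set n : Fin 5 → ℕ := fun w => (f w).toFinset.card with hn
  have hsum : ∑ w : Fin 5, n w ≤ 6 := by
    have hb := Finset.card_biUnion (s := Finset.univ) (t := fun w : Fin 5 => (f w).toFinset)
        (fun a _ b _ hab => by simpa [Set.disjoint_toFinset] using hdisj a b hab)
    have hsub : (Finset.univ.biUnion fun w : Fin 5 => (f w).toFinset).card ≤ Fintype.card V :=
      (Finset.card_le_card (Finset.subset_univ _)).trans_eq Finset.card_univ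
    have hbeq : ∑ u : Fin 5, ((fun w => (f w).toFinset) u).card = ∑ w : Fin 5, n w := rfl
    rw [← hbeq, ← hb]; exact hsub.trans hcard
  have hone : ∀ w, 1 ≤ n w :=
    fun w => Finset.card_pos.2 (Set.toFinset_nonempty.2 ⟨x w, hx w⟩)
  have hBcard : (Finset.univ.filter (fun w : Fin 5 => 2 ≤ n w)).card ≤ 1 := by
    by_contra hB
    push_neg at hB
    obtain ⟨w1, hw1, w2, hw2, hww⟩ := Finset.one_lt_card.mp hB
    simp only [Finset.mem_filter] at hw1 hw2
    have e1 : n w1 + ∑ w ∈ Finset.univ.erase w1, n w = ∑ w : Fin 5, n w :=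
      Finset.add_sum_erase _ _ (Finset.mem_univ w1)
    have hw2' : w2 ∈ Finset.univ.erase w1 := Finset.mem_erase.2 ⟨hww.symm, Finset.mem_univ _⟩
    have e2 : n w2 + ∑ w ∈ (Finset.univ.erase w1).erase w2, n w
        = ∑ w ∈ Finset.univ.erase w1, n w := Finset.add_sum_erase _ _ hw2'
    have e3 : ((Finset.univ.erase w1).erase w2).card = 3 := by
      rw [Finset.card_erase_of_mem hw2', Finset.card_erase_of_mem (Finset.mem_univ _)]
      simp
    have e4 : ((Finset.univ.erase w1).erase w2).card • 1 ≤
        ∑ w ∈ (Finset.univ.erase w1).erase w2, n w :=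
      Finset.card_nsmul_le_sum _ _ _ (fun w _ => hone w)
    simp only [smul_eq_mul, mul_one] at e4
    omega
  obtain ⟨w0, hw0⟩ : ∃ w0, ∀ w, w ≠ w0 → n w = 1 := by
    rcases Finset.eq_empty_or_nonempty (Finset.univ.filter (fun w : Fin 5 => 2 ≤ n w)) with
      hB0 | ⟨w0, hw0⟩
    · refine ⟨0, fun w _ => le_antisymm ?_ (hone w)⟩
      by_contra h
      push_neg at h
      exact absurd (Finset.mem_filter.2 ⟨Finset.mem_univ w, h⟩) (by rw [hB0]; exact Finset.notMem_empty w)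
    · refine ⟨w0, fun w hw => ?_⟩
      have hnotB : w ∉ Finset.univ.filter (fun w : Fin 5 => 2 ≤ n w) :=
        fun hmem => hw (Finset.card_le_one.mp hBcard _ hmem _ hw0)
      simp only [Finset.mem_filter, Finset.mem_univ, true_and, not_le] at hnotB
      have := hone w
      omega
  have hsingle : ∀ w, w ≠ w0 → ∀ y ∈ f w, y = x w := by
    intro w hw y hy
    exact Finset.card_le_one.mp (le_of_eq (hw0 w hw)) y (Set.mem_toFinset.2 hy)
      (x w) (Set.mem_toFinset.2 (hx w))
  have hinj : Function.Injective fun w : {w : Fin 5 // w ≠ w0} => c (x w.1) := by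
    intro w w' he
    by_contra hne'
    have hww : w.1 ≠ w'.1 := fun h => hne' (Subtype.ext h)
    obtain ⟨a, ha, b, hb, hab⟩ := hadj w.1 w'.1 hww
    rw [hsingle _ w.2 a ha, hsingle _ w'.2 b hb] at hab
    exact hc _ _ hab he
  have hcard4 : Fintype.card {w : Fin 5 // w ≠ w0} = 4 := by
    have h2 := Fintype.card_subtype_compl (fun w : Fin 5 => w = w0)
    simp only [Fintype.card_subtype_eq, Fintype.card_fin] at h2
    exact h2
  have := Fintype.card_le_of_injective _ hinj
  rw [hcard4] at this
  simp only [Fintype.card_fin] at this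
  omega

end Small

section Parity
open scoped Classical
variable {V : Type} {G : SimpleGraph V}

lemma noK33_parity [Fintype V] (c : V → Fin 3)
    (hc : ∀ u v, G.Adj u v → c u ≠ c v)
    (hfib : ∀ l : Fin 3, (Finset.univ.filter (fun v => c v = l)).card ≤ 2)
    (hcard : Fintype.card V ≤ 6) :
    ¬ GraphMinor (completeBipartiteGraph (Fin 3) (Fin 3)) G := by
  intro h
  obtain ⟨x, hinj, hadj⟩ := h.embeds (by simpa using hcard)
  have hsame : ∀ w w' : Fin 3 ⊕ Fin 3, c (x w) = c (x w') → w.isLeft = w'.isLeft := by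
    intro w w' he
    by_contra hne
    have hA : (completeBipartiteGraph (Fin 3) (Fin 3)).Adj w w' := by
      cases w <;> cases w' <;> simp_all [completeBipartiteGraph]
    exact hc _ _ (hadj _ _ hA) he
  have hdfib : ∀ l : Fin 3,
      (Finset.univ.filter (fun w : Fin 3 ⊕ Fin 3 => c (x w) = l)).card ≤ 2 := by
    intro l
    refine (Finset.card_le_card_of_injOn x ?_ hinj.injOn).trans (hfib l)
    intro w hw
    simp only [Finset.mem_coe, Finset.mem_filter, Finset.mem_univ, true_and] at hw ⊢
    exact hw
  have htot : ∑ l : Fin 3,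
      (Finset.univ.filter (fun w : Fin 3 ⊕ Fin 3 => c (x w) = l)).card = 6 := by
    have := Finset.card_eq_sum_card_fiberwise
      (s := (Finset.univ : Finset (Fin 3 ⊕ Fin 3))) (t := Finset.univ)
      (f := fun w => c (x w)) (fun w _ => Finset.mem_univ _)
    simpa using this.symm
  have h0 := hdfib 0; have h1 := hdfib 1; have h2 := hdfib 2
  rw [Fin.sum_univ_three] at htot
  have he0 : (Finset.univ.filter (fun w : Fin 3 ⊕ Fin 3 => c (x w) = 0)).card = 2 := by omega
  have he1 : (Finset.univ.filter (fun w : Fin 3 ⊕ Fin 3 => c (x w) = 1)).card = 2 := by omega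
  have he2 : (Finset.univ.filter (fun w : Fin 3 ⊕ Fin 3 => c (x w) = 2)).card = 2 := by omega
  have hleft := Finset.card_eq_sum_card_fiberwise
      (s := Finset.univ.filter (fun w : Fin 3 ⊕ Fin 3 => w.isLeft = true))
      (t := (Finset.univ : Finset (Fin 3))) (f := fun w => c (x w))
      (fun w _ => Finset.mem_univ _)
  beta_reduce at hleft
  have hL : (Finset.univ.filter (fun w : Fin 3 ⊕ Fin 3 => w.isLeft = true)).card = 3 := by
    decide
  have hterm : ∀ l : Fin 3,
      (Finset.univ.filter (fun w : Fin 3 ⊕ Fin 3 => c (x w) = l)).card = 2 →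
      ((Finset.univ.filter (fun w : Fin 3 ⊕ Fin 3 => w.isLeft = true)).filter
        (fun w => c (x w) = l)).card = 0 ∨
      ((Finset.univ.filter (fun w : Fin 3 ⊕ Fin 3 => w.isLeft = true)).filter
        (fun w => c (x w) = l)).card = 2 := by
    intro l hfl
    by_cases hex : ∃ w : Fin 3 ⊕ Fin 3, c (x w) = l ∧ w.isLeft = true
    · right
      obtain ⟨w0, hw0, hw0l⟩ := hex
      have heq : ((Finset.univ.filter (fun w : Fin 3 ⊕ Fin 3 => w.isLeft = true)).filter
          (fun w => c (x w) = l)) =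
          Finset.univ.filter (fun w : Fin 3 ⊕ Fin 3 => c (x w) = l) := by
        ext w
        simp only [Finset.mem_filter, Finset.mem_univ, true_and]
        constructor
        · rintro ⟨-, h⟩; exact h
        · intro hcw
          exact ⟨(hsame w w0 (hcw.trans hw0.symm)).trans hw0l, hcw⟩
      rw [heq]
      exact hfl
    · left
      rw [Finset.card_eq_zero]
      push_neg at hex
      ext w
      simp only [Finset.mem_filter, Finset.mem_univ, true_and, Finset.notMem_empty,
        iff_false, not_and]
      intro hwl hcw
      exact absurd hwl (by simpa [hcw] using fun h => (hex w h) hwl)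
  rw [Fin.sum_univ_three, hL] at hleft
  rcases hterm 0 he0 with t0|t0 <;> rcases hterm 1 he1 with t1|t1 <;>
    rcases hterm 2 he2 with t2|t2 <;> omega
end Parity

section IsoMachinery


def sigmaFstFiber {ι : Type} (V : ι → Type) (i : ι) : {x : Σ j, V j // x.1 = i} ≃ V i where
  toFun x := x.2 ▸ x.1.2
  invFun v := ⟨⟨i, v⟩, rfl⟩
  left_inv := by rintro ⟨⟨j, v⟩, rfl⟩; rfl
  right_inv v := rfl

lemma iso_of_fiber_card {α β L L' : Type} [Fintype α] [Fintype β]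
    [DecidableEq L] [DecidableEq L']
    (p : α → L) (q : β → L') (g : L ≃ L')
    (h : ∀ l, Fintype.card {a // p a = l} = Fintype.card {b // q b = g l}) :
    Nonempty ((SimpleGraph.comap p ⊤ : SimpleGraph α) ≃g
      (SimpleGraph.comap q ⊤ : SimpleGraph β)) := by
  have E : ∀ l, {a // p a = l} ≃ {b // q b = g l} := fun l => Fintype.equivOfCardEq (h l)
  let e : α ≃ β :=
    ((Equiv.sigmaFiberEquiv p).symm.trans (Equiv.sigmaCongr g E)).trans
      (Equiv.sigmaFiberEquiv q)
  have hcomm : ∀ a, q (e a) = g (p a) := by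
    intro a
    have he : e a = ((E (p a)) ⟨a, rfl⟩).1 := rfl
    rw [he]
    exact ((E (p a)) ⟨a, rfl⟩).2
  refine ⟨⟨e, ?_⟩⟩
  intro a b
  show q (e a) ≠ q (e b) ↔ p a ≠ p b
  rw [hcomm, hcomm]
  exact not_congr g.injective.eq_iff

end IsoMachinery

def lab3 (a b c : ℕ) : Fin a ⊕ Fin b ⊕ Fin c → Fin 3 :=
  Sum.elim (fun _ => 0) (Sum.elim (fun _ => 1) (fun _ => 2))

def lab4 (a b c d : ℕ) : Fin a ⊕ Fin b ⊕ Fin c ⊕ Fin d → Fin 4 :=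
  Sum.elim (fun _ => 0) (Sum.elim (fun _ => 1) (Sum.elim (fun _ => 2) (fun _ => 3)))

lemma KP3_eq (a b c : ℕ) : KP3 a b c = SimpleGraph.comap (lab3 a b c) ⊤ := rfl
lemma KP4_eq (a b c d : ℕ) : KP4 a b c d = SimpleGraph.comap (lab4 a b c d) ⊤ := rfl

lemma cbg_eq (A B : Type) : completeBipartiteGraph A B =
    SimpleGraph.comap Sum.isLeft (⊤ : SimpleGraph Bool) := by
  ext x y
  cases x <;> cases y <;> simp [completeBipartiteGraph]

-- fiber equivs for lab3
def lab3fib0 (a b c : ℕ) : {x : Fin a ⊕ Fin b ⊕ Fin c // lab3 a b c x = 0} ≃ Fin a where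
  toFun x := match x with
    | ⟨Sum.inl v, _⟩ => v
    | ⟨Sum.inr (Sum.inl v), h⟩ => absurd h (by simp [lab3])
    | ⟨Sum.inr (Sum.inr v), h⟩ => absurd h (by simp [lab3])
  invFun v := ⟨Sum.inl v, rfl⟩
  left_inv := by rintro ⟨(v | v | v), h⟩ <;> first | rfl | exact absurd h (by simp [lab3])
  right_inv v := rfl

def lab3fib1 (a b c : ℕ) : {x : Fin a ⊕ Fin b ⊕ Fin c // lab3 a b c x = 1} ≃ Fin b where
  toFun x := match x with
    | ⟨Sum.inr (Sum.inl v), _⟩ => v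
    | ⟨Sum.inl v, h⟩ => absurd h (by simp [lab3])
    | ⟨Sum.inr (Sum.inr v), h⟩ => absurd h (by simp [lab3])
  invFun v := ⟨Sum.inr (Sum.inl v), rfl⟩
  left_inv := by rintro ⟨(v | v | v), h⟩ <;> first | rfl | exact absurd h (by simp [lab3])
  right_inv v := rfl

def lab3fib2 (a b c : ℕ) : {x : Fin a ⊕ Fin b ⊕ Fin c // lab3 a b c x = 2} ≃ Fin c where
  toFun x := match x with
    | ⟨Sum.inr (Sum.inr v), _⟩ => v
    | ⟨Sum.inl v, h⟩ => absurd h (by simp [lab3])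
    | ⟨Sum.inr (Sum.inl v), h⟩ => absurd h (by simp [lab3])
  invFun v := ⟨Sum.inr (Sum.inr v), rfl⟩
  left_inv := by rintro ⟨(v | v | v), h⟩ <;> first | rfl | exact absurd h (by simp [lab3])
  right_inv v := rfl

-- isLeft fiber equivs
def isLeftFibT (A B : Type) : {x : A ⊕ B // x.isLeft = true} ≃ A where
  toFun x := match x with
    | ⟨Sum.inl v, _⟩ => v
    | ⟨Sum.inr v, h⟩ => absurd h (by simp)
  invFun v := ⟨Sum.inl v, rfl⟩
  left_inv := by rintro ⟨(v | v), h⟩ <;> first | rfl | exact absurd h (by simp)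
  right_inv v := rfl

def isLeftFibF (A B : Type) : {x : A ⊕ B // x.isLeft = false} ≃ B where
  toFun x := match x with
    | ⟨Sum.inr v, _⟩ => v
    | ⟨Sum.inl v, h⟩ => absurd h (by simp)
  invFun v := ⟨Sum.inr v, rfl⟩
  left_inv := by rintro ⟨(v | v), h⟩ <;> first | rfl | exact absurd h (by simp)
  right_inv v := rfl

section Targets
open scoped Classical

lemma isPlanar_of_iso {α β : Type} {G : SimpleGraph α} {G' : SimpleGraph β}
    (e : G ≃g G') (h : IsPlanar G') : IsPlanar G :=
  ⟨fun m => h.1 (m.of_iso e), fun m => h.2 (m.of_iso e)⟩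

lemma planar_K4 : IsPlanar (completeGraph (Fin 4)) := by
  constructor
  · intro h
    have := h.card_le
    simp at this
  · intro h
    have := h.card_le
    simp at this

lemma planar_KP4_1112 : IsPlanar (KP4 1 1 1 2) := by
  constructor
  · exact noK5_smallcolor (lab4 1 1 1 2) (fun _ _ h => h) le_rfl (by simp)
  · intro h
    have := h.card_le
    simp at this

lemma planar_KP3_122 : IsPlanar (KP3 1 2 2) := by
  constructor
  · exact noK5_3color (lab3 1 2 2) (fun _ _ h => h) (by simp)
  · intro h
    have := h.card_le
    simp at this

lemma planar_KP3_222 : IsPlanar (KP3 2 2 2) := by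
  constructor
  · exact noK5_3color (lab3 2 2 2) (fun _ _ h => h) (by simp)
  · exact noK33_parity (lab3 2 2 2) (fun _ _ h => h) (by decide) (by simp)

lemma planar_KP3_11n (n : ℕ) : IsPlanar (KP3 1 1 n) := by
  constructor
  · refine noK5_indep (Sum.elim (fun _ => 0) (Sum.elim (fun _ => 1) (fun _ => 3))) ?_ ?_
    · rintro (u|u|u) (v|v|v) hu hv hadj <;> simp_all [KP3, lab3]
    · rintro (u|u|u) (v|v|v) he hne <;>
        first
          | exact congrArg _ (Subsingleton.elim u v)
          | (simp_all; try exact Subsingleton.elim u v)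
  · refine noK33_indep (Sum.elim (fun _ => 0) (Sum.elim (fun _ => 1) (fun _ => 2))) ?_ ?_
    · rintro (u|u|u) (v|v|v) hu hv hadj <;> simp_all [KP3, lab3]
    · rintro (u|u|u) (v|v|v) he hne <;>
        first
          | exact congrArg _ (Subsingleton.elim u v)
          | (simp_all; try exact Subsingleton.elim u v)

lemma planar_K2n (n : ℕ) : IsPlanar (completeBipartiteGraph (Fin 2) (Fin n)) := by
  constructor
  · refine noK5_indep (Sum.elim (fun a => Fin.castLE (by omega) a) (fun _ => 3)) ?_ ?_
    · rintro (u|u) (v|v) hu hv hadj <;>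
        first
          | (have := congrArg Fin.val hu; simp at this; omega)
          | (have := congrArg Fin.val hv; simp at this; omega)
          | simp_all [completeBipartiteGraph]
    · rintro (u|u) (v|v) he hne
      · have := congrArg Fin.val he
        simp only [Sum.elim_inl, Fin.coe_castLE] at this
        exact congrArg _ (Fin.ext this)
      · exact absurd he hne
      · exact absurd rfl hne
      · exact absurd rfl hne
  · refine noK33_indep (Sum.elim (fun a => Fin.castLE (by omega) a) (fun _ => 2)) ?_ ?_
    · rintro (u|u) (v|v) hu hv hadj <;>
        first
          | (have := congrArg Fin.val hu; simp at this; omega)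
          | (have := congrArg Fin.val hv; simp at this; omega)
          | simp_all [completeBipartiteGraph]
    · rintro (u|u) (v|v) he hne
      · have := congrArg Fin.val he
        simp only [Sum.elim_inl, Fin.coe_castLE] at this
        exact congrArg _ (Fin.ext this)
      · exact absurd he hne
      · exact absurd rfl hne
      · exact absurd rfl hne

lemma planar_K1n (n : ℕ) : IsPlanar (completeBipartiteGraph (Fin 1) (Fin n)) := by
  constructor
  · refine noK5_indep (Sum.elim (fun _ => 0) (fun _ => 3)) ?_ ?_
    · rintro (u|u) (v|v) hu hv hadj <;> simp_all [completeBipartiteGraph]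
    · rintro (u|u) (v|v) he hne <;>
        first
          | exact congrArg _ (Subsingleton.elim u v)
          | (simp_all; try exact Subsingleton.elim u v)
  · refine noK33_indep (Sum.elim (fun _ => 0) (fun _ => 2)) ?_ ?_
    · rintro (u|u) (v|v) hu hv hadj <;> simp_all [completeBipartiteGraph]
    · rintro (u|u) (v|v) he hne <;>
        first
          | exact congrArg _ (Subsingleton.elim u v)
          | (simp_all; try exact Subsingleton.elim u v)

end Targets

section Forward
open scoped Classical
variable {ι : Type} [Fintype ι] {V : ι → Type} [∀ i, Fintype (V i)]

lemma card_part_fiber (i : ι) :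
    Fintype.card {x : Σ j, V j // x.1 = i} = Fintype.card (V i) :=
  Fintype.card_congr (sigmaFstFiber V i)

lemma np_K5 (hne : ∀ i, Nonempty (V i)) (h5 : 5 ≤ Fintype.card ι) :
    GraphMinor (completeGraph (Fin 5)) (completeMultipartiteGraph V) := by
  obtain ⟨g⟩ : Nonempty (Fin 5 ↪ ι) :=
    Function.Embedding.nonempty_of_card_le (by simpa using h5)
  refine graphMinor_of_injective (fun w => ⟨g w, (hne (g w)).some⟩) ?_ ?_
  · intro w w' h
    exact g.injective (congrArg Sigma.fst h)
  · intro w w' hww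
    exact fun hfst => hww (g.injective hfst)

lemma np_K33_gen (x : Fin 3 ⊕ Fin 3 → Σ i, V i) (hinj : Function.Injective x)
    (hcross : ∀ s t : Fin 3, (x (Sum.inl s)).1 ≠ (x (Sum.inr t)).1) :
    GraphMinor (completeBipartiteGraph (Fin 3) (Fin 3)) (completeMultipartiteGraph V) := by
  refine graphMinor_of_injective x hinj ?_
  rintro (s|s) (t|t) hadj
  · simp [completeBipartiteGraph] at hadj
  · exact hcross s t
  · exact Ne.symm (hcross t s)
  · simp [completeBipartiteGraph] at hadj

lemma np_K33_big (i : ι) (h3 : 3 ≤ Fintype.card (V i))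
    (y : Fin 3 → Σ j, V j) (hyinj : Function.Injective y) (hyi : ∀ t, (y t).1 ≠ i) :
    GraphMinor (completeBipartiteGraph (Fin 3) (Fin 3)) (completeMultipartiteGraph V) := by
  obtain ⟨u⟩ : Nonempty (Fin 3 ↪ V i) :=
    Function.Embedding.nonempty_of_card_le (by simpa using h3)
  refine np_K33_gen (Sum.elim (fun s => ⟨i, u s⟩) y) ?_ (fun s t => (hyi t).symm)
  rintro (s|s) (t|t) h
  · simp only [Sum.elim_inl] at h
    exact congrArg Sum.inl (u.injective (eq_of_heq (Sigma.mk.inj_iff.mp h).2))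
  · exact absurd (congrArg Sigma.fst h).symm (hyi t)
  · exact absurd (congrArg Sigma.fst h) (hyi s)
  · exact congrArg Sum.inr (hyinj h)

lemma np_K33_2parts (hne : ∀ i, Nonempty (V i)) (i j p q : ι)
    (hij : i ≠ j) (hip : i ≠ p) (hiq : i ≠ q) (hpj : p ≠ j) (hpq : p ≠ q) (hjq : j ≠ q)
    (h2i : 2 ≤ Fintype.card (V i)) (h2j : 2 ≤ Fintype.card (V j)) :
    GraphMinor (completeBipartiteGraph (Fin 3) (Fin 3)) (completeMultipartiteGraph V) := by
  obtain ⟨c1, c2, hc⟩ := Fintype.exists_pair_of_one_lt_card (α := V i) (by omega)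
  obtain ⟨d1, d2, hd⟩ := Fintype.exists_pair_of_one_lt_card (α := V j) (by omega)
  refine np_K33_gen
    (Sum.elim ![⟨i, c1⟩, ⟨i, c2⟩, ⟨p, (hne p).some⟩]
      ![⟨j, d1⟩, ⟨j, d2⟩, ⟨q, (hne q).some⟩]) ?_ ?_
  · rintro (s|s) (t|t) h <;> fin_cases s <;> fin_cases t <;>
      simp_all [Sigma.mk.inj_iff]
  · intro s t
    fin_cases s <;> fin_cases t <;> simp_all

lemma iso_bipartite (i j : ι) (hij : i ≠ j) (hcov : ∀ l, l = i ∨ l = j) (m : ℕ)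
    (hj : Fintype.card (V j) = m) :
    Nonempty (completeMultipartiteGraph V ≃g
      completeBipartiteGraph (Fin m) (Fin (Fintype.card (V i)))) := by
  rw [cbg_eq]
  let g : ι ≃ Bool := {
    toFun := fun l => if l = j then true else false
    invFun := fun b => if b then j else i
    left_inv := by
      intro l
      rcases hcov l with rfl | rfl
      · simp [hij]
      · simp
    right_inv := by
      intro b
      cases b <;> simp [hij] }
  refine iso_of_fiber_card Sigma.fst Sum.isLeft g ?_
  intro l
  rcases hcov l with rfl | rfl
  · have hg : g l = false := by simp [g, hij]
    rw [hg, card_part_fiber,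
      Fintype.card_congr (isLeftFibF (Fin m) (Fin (Fintype.card (V l)))), Fintype.card_fin]
  · have hg : g l = true := by simp [g]
    rw [hg, card_part_fiber,
      Fintype.card_congr (isLeftFibT (Fin m) (Fin (Fintype.card (V i)))), Fintype.card_fin, hj]

lemma iso_tripartite (i0 i1 i2 : ι) (h01 : i0 ≠ i1) (h02 : i0 ≠ i2) (h12 : i1 ≠ i2)
    (hcov : ∀ l, l = i0 ∨ l = i1 ∨ l = i2) (a b c : ℕ)
    (ha : Fintype.card (V i0) = a) (hb : Fintype.card (V i1) = b)
    (hc : Fintype.card (V i2) = c) :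
    Nonempty (completeMultipartiteGraph V ≃g KP3 a b c) := by
  rw [KP3_eq]
  let g : ι ≃ Fin 3 := {
    toFun := fun l => if l = i0 then 0 else if l = i1 then 1 else 2
    invFun := ![i0, i1, i2]
    left_inv := by
      intro l
      rcases hcov l with rfl | rfl | rfl
      · simp
      · simp [h01.symm]
      · simp [h02.symm, h12.symm]
    right_inv := by
      intro t
      fin_cases t <;> simp [h01.symm, h02.symm, h12.symm, h01, h02, h12] }
  refine iso_of_fiber_card Sigma.fst (lab3 a b c) g ?_
  intro l
  rcases hcov l with rfl | rfl | rfl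
  · have hg : g l = 0 := by simp [g]
    rw [hg, card_part_fiber, ha, Fintype.card_congr (lab3fib0 a b c), Fintype.card_fin]
  · have hg : g l = 1 := by simp [g, h01.symm]
    rw [hg, card_part_fiber, hb, Fintype.card_congr (lab3fib1 a b c), Fintype.card_fin]
  · have hg : g l = 2 := by simp [g, h02.symm, h12.symm]
    rw [hg, card_part_fiber, hc, Fintype.card_congr (lab3fib2 a b c), Fintype.card_fin]

lemma iso_K4 (hcard : Fintype.card ι = 4) (h1 : ∀ l, Fintype.card (V l) = 1) :
    Nonempty (completeMultipartiteGraph V ≃g completeGraph (Fin 4)) := by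
  have hK : completeGraph (Fin 4) = SimpleGraph.comap (id : Fin 4 → Fin 4) ⊤ := rfl
  rw [hK]
  refine iso_of_fiber_card Sigma.fst id (Fintype.equivFinOfCardEq hcard) ?_
  intro l
  rw [card_part_fiber, h1 l]
  have : Fintype.card {b : Fin 4 // b = Fintype.equivFinOfCardEq hcard l} = 1 :=
    Fintype.card_subtype_eq _
  simpa [id] using this.symm

lemma iso_KP4_1112 (i0 i1 i2 i3 : ι)
    (h01 : i0 ≠ i1) (h02 : i0 ≠ i2) (h03 : i0 ≠ i3)
    (h12 : i1 ≠ i2) (h13 : i1 ≠ i3) (h23 : i2 ≠ i3)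
    (hcov : ∀ l, l = i0 ∨ l = i1 ∨ l = i2 ∨ l = i3)
    (h0 : Fintype.card (V i0) = 1) (h1 : Fintype.card (V i1) = 1)
    (h2 : Fintype.card (V i2) = 1) (h3 : Fintype.card (V i3) = 2) :
    Nonempty (completeMultipartiteGraph V ≃g KP4 1 1 1 2) := by
  rw [KP4_eq]
  let g : ι ≃ Fin 4 := {
    toFun := fun l => if l = i0 then 0 else if l = i1 then 1 else if l = i2 then 2 else 3
    invFun := ![i0, i1, i2, i3]
    left_inv := by
      intro l
      rcases hcov l with rfl | rfl | rfl | rfl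
      · simp
      · simp [h01.symm]
      · simp [h02.symm, h12.symm]
      · simp [h03.symm, h13.symm, h23.symm]
    right_inv := by
      intro t
      fin_cases t <;> simp [h01.symm, h02.symm, h03.symm, h12.symm, h13.symm, h23.symm] }
  refine iso_of_fiber_card Sigma.fst (lab4 1 1 1 2) g ?_
  intro l
  rcases hcov l with rfl | rfl | rfl | rfl
  · have hg : g l = 0 := by simp [g]
    rw [hg, card_part_fiber, h0]
    decide
  · have hg : g l = 1 := by simp [g, h01.symm]
    rw [hg, card_part_fiber, h1]
    decide
  · have hg : g l = 2 := by simp [g, h02.symm, h12.symm]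
    rw [hg, card_part_fiber, h2]
    decide
  · have hg : g l = 3 := by simp [g, h03.symm, h13.symm, h23.symm]
    rw [hg, card_part_fiber, h3]
    decide

end Forward

section Main
open scoped Classical
variable {ι : Type} [Fintype ι] {V : ι → Type} [∀ i, Fintype (V i)]

@[reducible] def PlanarRHS (V : ι → Type) [∀ i, Fintype (V i)] : Prop :=
  (Nonempty (completeMultipartiteGraph V ≃g KP4 1 1 1 2) ∨
   Nonempty (completeMultipartiteGraph V ≃g completeGraph (Fin 4)) ∨
   Nonempty (completeMultipartiteGraph V ≃g KP3 2 2 2) ∨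
   Nonempty (completeMultipartiteGraph V ≃g KP3 1 2 2) ∨
   ∃ n : ℕ, 1 ≤ n ∧
     (Nonempty (completeMultipartiteGraph V ≃g KP3 1 1 n) ∨
      Nonempty (completeMultipartiteGraph V ≃g completeBipartiteGraph (Fin 2) (Fin n)) ∨
      Nonempty (completeMultipartiteGraph V ≃g completeBipartiteGraph (Fin 1) (Fin n))))

lemma aux_k3_big (hne : ∀ i, Nonempty (V i))
    (hK33 : ¬ GraphMinor (completeBipartiteGraph (Fin 3) (Fin 3)) (completeMultipartiteGraph V))
    (a b c : ι) (hab : a ≠ b) (hac : a ≠ c) (hbc : b ≠ c)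
    (hcov : ∀ l, l = a ∨ l = b ∨ l = c) (h3 : 3 ≤ Fintype.card (V c)) :
    PlanarRHS V := by
  have hposV : ∀ l, 1 ≤ Fintype.card (V l) := fun l => Fintype.card_pos_iff.mpr (hne l)
  by_cases hsmall : Fintype.card (V a) = 1 ∧ Fintype.card (V b) = 1
  · exact Or.inr (Or.inr (Or.inr (Or.inr ⟨Fintype.card (V c), by omega,
      Or.inl (iso_tripartite a b c hab hac hbc hcov 1 1 _ hsmall.1 hsmall.2 rfl)⟩)))
  · exfalso
    have h2 : 2 ≤ Fintype.card (V a) ∨ 2 ≤ Fintype.card (V b) := by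
      have := hposV a; have := hposV b
      by_contra hno; push_neg at hno; exact hsmall ⟨by omega, by omega⟩
    rcases h2 with h2 | h2
    · obtain ⟨u1, u2, hu⟩ := Fintype.exists_pair_of_one_lt_card (α := V a) (by omega)
      refine hK33 (np_K33_big c h3 ![⟨a, u1⟩, ⟨a, u2⟩, ⟨b, (hne b).some⟩] ?_ ?_)
      · intro s t h
        fin_cases s <;> fin_cases t <;> simp_all [Sigma.mk.inj_iff]
      · intro t; fin_cases t <;> simp [hac, hbc]
    · obtain ⟨u1, u2, hu⟩ := Fintype.exists_pair_of_one_lt_card (α := V b) (by omega)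
      refine hK33 (np_K33_big c h3 ![⟨b, u1⟩, ⟨b, u2⟩, ⟨a, (hne a).some⟩] ?_ ?_)
      · intro s t h
        fin_cases s <;> fin_cases t <;> simp_all [Sigma.mk.inj_iff]
      · intro t; fin_cases t <;> simp [hac, hbc]

lemma aux_k4_big (hne : ∀ i, Nonempty (V i))
    (hK33 : ¬ GraphMinor (completeBipartiteGraph (Fin 3) (Fin 3)) (completeMultipartiteGraph V))
    (a b c d : ι) (hab : a ≠ b) (hac : a ≠ c) (had : a ≠ d)
    (hbc : b ≠ c) (hbd : b ≠ d) (hcd : c ≠ d)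
    (hcov : ∀ l, l = a ∨ l = b ∨ l = c ∨ l = d) (h2 : 2 ≤ Fintype.card (V d)) :
    PlanarRHS V := by
  have hposV : ∀ l, 1 ≤ Fintype.card (V l) := fun l => Fintype.card_pos_iff.mpr (hne l)
  have pairF : ∀ i j p q : ι, i ≠ j → i ≠ p → i ≠ q → p ≠ j → p ≠ q → j ≠ q →
      2 ≤ Fintype.card (V i) → 2 ≤ Fintype.card (V j) → False :=
    fun i j p q h1 h2' h3 h4 h5 h6 c1 c2 =>
      hK33 (np_K33_2parts hne i j p q h1 h2' h3 h4 h5 h6 c1 c2)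
  have ha1 : Fintype.card (V a) = 1 := by
    by_contra h
    exact pairF a d b c had hab hac hbd hbc hcd.symm (by have := hposV a; omega) h2
  have hb1 : Fintype.card (V b) = 1 := by
    by_contra h
    exact pairF b d a c hbd hab.symm hbc had hac hcd.symm (by have := hposV b; omega) h2
  have hc1 : Fintype.card (V c) = 1 := by
    by_contra h
    exact pairF c d a b hcd hac.symm hbc.symm had hab hbd.symm (by have := hposV c; omega) h2
  have hd2 : Fintype.card (V d) = 2 := by
    by_contra h
    refine hK33 (np_K33_big d (by omega)
      ![⟨a, (hne a).some⟩, ⟨b, (hne b).some⟩, ⟨c, (hne c).some⟩] ?_ ?_)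
    · intro s t hxy
      fin_cases s <;> fin_cases t <;> simp_all [Sigma.mk.inj_iff]
    · intro t; fin_cases t <;> simp [had, hbd, hcd]
  exact Or.inl (iso_KP4_1112 a b c d hab hac had hbc hbd hcd hcov ha1 hb1 hc1 hd2)

end Main

/-- A complete multipartite graph (with at least two parts, all nonempty) is
planar iff it is one of `K_{1,1,1,2}`, `K₄`, `K_{2,2,2}`, `K_{1,2,2}`,
`K_{1,1,n}`, `K_{2,n}`, `K_{1,n}` for some `n ≥ 1`. -/
theorem completeMultipartite_planar_iff {ι : Type} [Fintype ι]
    (hι : 2 ≤ Fintype.card ι) (V : ι → Type) [∀ i, Fintype (V i)]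
    (hne : ∀ i, Nonempty (V i)) :
    IsPlanar (completeMultipartiteGraph V) ↔
      (Nonempty (completeMultipartiteGraph V ≃g KP4 1 1 1 2) ∨
       Nonempty (completeMultipartiteGraph V ≃g completeGraph (Fin 4)) ∨
       Nonempty (completeMultipartiteGraph V ≃g KP3 2 2 2) ∨
       Nonempty (completeMultipartiteGraph V ≃g KP3 1 2 2) ∨
       ∃ n : ℕ, 1 ≤ n ∧
         (Nonempty (completeMultipartiteGraph V ≃g KP3 1 1 n) ∨
          Nonempty (completeMultipartiteGraph V ≃g completeBipartiteGraph (Fin 2) (Fin n)) ∨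
          Nonempty (completeMultipartiteGraph V ≃g completeBipartiteGraph (Fin 1) (Fin n)))) := by
    classical
  have hposV : ∀ l, 1 ≤ Fintype.card (V l) := fun l => Fintype.card_pos_iff.mpr (hne l)
  constructor
  · intro hpl
    show PlanarRHS V
    by_cases h5 : 5 ≤ Fintype.card ι
    · exact absurd (np_K5 hne h5) hpl.1
    push_neg at h5
    have hk : Fintype.card ι = 2 ∨ Fintype.card ι = 3 ∨ Fintype.card ι = 4 := by omega
    rcases hk with hk | hk | hk
    · -- two parts
      have e := Fintype.equivFinOfCardEq hk
      set i := e.symm 0 with hidef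
      set j := e.symm 1 with hjdef
      have hij : i ≠ j := fun h => absurd (e.symm.injective h) (by decide)
      have hcov : ∀ l, l = i ∨ l = j := by
        intro l
        have hl := e.symm_apply_apply l
        rcases (by decide : ∀ t : Fin 2, t = 0 ∨ t = 1) (e l) with h | h
        · left; rw [← hl, h]
        · right; rw [← hl, h]
      by_cases hbig : 3 ≤ Fintype.card (V i) ∧ 3 ≤ Fintype.card (V j)
      · exfalso
        obtain ⟨u⟩ : Nonempty (Fin 3 ↪ V j) :=
          Function.Embedding.nonempty_of_card_le (by simpa using hbig.2)
        refine hpl.2 (np_K33_big i hbig.1 (fun t => ⟨j, u t⟩) ?_ (fun t => hij.symm))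
        intro s t h
        exact u.injective (eq_of_heq (Sigma.mk.inj_iff.mp h).2)
      · by_cases hj2 : Fintype.card (V j) ≤ 2
        · have hj12 : Fintype.card (V j) = 1 ∨ Fintype.card (V j) = 2 := by
            have := hposV j; omega
          refine Or.inr (Or.inr (Or.inr (Or.inr ⟨Fintype.card (V i), hposV i, ?_⟩)))
          rcases hj12 with h1 | h2
          · exact Or.inr (Or.inr (iso_bipartite i j hij hcov 1 h1))
          · exact Or.inr (Or.inl (iso_bipartite i j hij hcov 2 h2))
        · have hi2 : Fintype.card (V i) ≤ 2 := by
            by_contra h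
            exact hbig ⟨by omega, by omega⟩
          have hi12 : Fintype.card (V i) = 1 ∨ Fintype.card (V i) = 2 := by
            have := hposV i; omega
          have hcov' : ∀ l, l = j ∨ l = i := fun l => (hcov l).symm
          refine Or.inr (Or.inr (Or.inr (Or.inr ⟨Fintype.card (V j), hposV j, ?_⟩)))
          rcases hi12 with h1 | h2
          · exact Or.inr (Or.inr (iso_bipartite j i hij.symm hcov' 1 h1))
          · exact Or.inr (Or.inl (iso_bipartite j i hij.symm hcov' 2 h2))
    · -- three parts
      have e := Fintype.equivFinOfCardEq hk
      set i0 := e.symm 0 with h0def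
      set i1 := e.symm 1 with h1def
      set i2 := e.symm 2 with h2def
      have h01 : i0 ≠ i1 := fun h => absurd (e.symm.injective h) (by decide)
      have h02 : i0 ≠ i2 := fun h => absurd (e.symm.injective h) (by decide)
      have h12 : i1 ≠ i2 := fun h => absurd (e.symm.injective h) (by decide)
      have hcov : ∀ l, l = i0 ∨ l = i1 ∨ l = i2 := by
        intro l
        have hl := e.symm_apply_apply l
        rcases (by decide : ∀ t : Fin 3, t = 0 ∨ t = 1 ∨ t = 2) (e l) with h | h | h
        · left; rw [← hl, h]
        · right; left; rw [← hl, h]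
        · right; right; rw [← hl, h]
      by_cases hb0 : 3 ≤ Fintype.card (V i0)
      · refine aux_k3_big hne hpl.2 i1 i2 i0 h12 h01.symm h02.symm ?_ hb0
        intro l; rcases hcov l with rfl | rfl | rfl <;> tauto
      by_cases hb1 : 3 ≤ Fintype.card (V i1)
      · refine aux_k3_big hne hpl.2 i0 i2 i1 h02 h01 h12.symm ?_ hb1
        intro l; rcases hcov l with rfl | rfl | rfl <;> tauto
      by_cases hb2 : 3 ≤ Fintype.card (V i2)
      · exact aux_k3_big hne hpl.2 i0 i1 i2 h01 h02 h12 hcov hb2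
      have hc0 : Fintype.card (V i0) = 1 ∨ Fintype.card (V i0) = 2 := by
        have := hposV i0; omega
      have hc1 : Fintype.card (V i1) = 1 ∨ Fintype.card (V i1) = 2 := by
        have := hposV i1; omega
      have hc2 : Fintype.card (V i2) = 1 ∨ Fintype.card (V i2) = 2 := by
        have := hposV i2; omega
      rcases hc0 with hc0 | hc0 <;> rcases hc1 with hc1 | hc1 <;> rcases hc2 with hc2 | hc2
      · exact Or.inr (Or.inr (Or.inr (Or.inr ⟨1, le_rfl,
          Or.inl (iso_tripartite i0 i1 i2 h01 h02 h12 hcov 1 1 1 hc0 hc1 hc2)⟩)))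
      · exact Or.inr (Or.inr (Or.inr (Or.inr ⟨2, by omega,
          Or.inl (iso_tripartite i0 i1 i2 h01 h02 h12 hcov 1 1 2 hc0 hc1 hc2)⟩)))
      · refine Or.inr (Or.inr (Or.inr (Or.inr ⟨2, by omega,
          Or.inl (iso_tripartite i0 i2 i1 h02 h01 h12.symm ?_ 1 1 2 hc0 hc2 hc1)⟩)))
        intro l; rcases hcov l with rfl | rfl | rfl <;> tauto
      · refine Or.inr (Or.inr (Or.inr (Or.inl
          (iso_tripartite i0 i1 i2 h01 h02 h12 hcov 1 2 2 hc0 hc1 hc2))))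
      · refine Or.inr (Or.inr (Or.inr (Or.inr ⟨2, by omega,
          Or.inl (iso_tripartite i1 i2 i0 h12 h01.symm h02.symm ?_ 1 1 2 hc1 hc2 hc0)⟩)))
        intro l; rcases hcov l with rfl | rfl | rfl <;> tauto
      · refine Or.inr (Or.inr (Or.inr (Or.inl
          (iso_tripartite i1 i0 i2 h01.symm h12 h02 ?_ 1 2 2 hc1 hc0 hc2))))
        intro l; rcases hcov l with rfl | rfl | rfl <;> tauto
      · refine Or.inr (Or.inr (Or.inr (Or.inl
          (iso_tripartite i2 i0 i1 h02.symm h12.symm h01 ?_ 1 2 2 hc2 hc0 hc1))))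
        intro l; rcases hcov l with rfl | rfl | rfl <;> tauto
      · exact Or.inr (Or.inr (Or.inl
          (iso_tripartite i0 i1 i2 h01 h02 h12 hcov 2 2 2 hc0 hc1 hc2)))
    · -- four parts
      have e := Fintype.equivFinOfCardEq hk
      set i0 := e.symm 0 with h0def
      set i1 := e.symm 1 with h1def
      set i2 := e.symm 2 with h2def
      set i3 := e.symm 3 with h3def
      have h01 : i0 ≠ i1 := fun h => absurd (e.symm.injective h) (by decide)
      have h02 : i0 ≠ i2 := fun h => absurd (e.symm.injective h) (by decide)
      have h03 : i0 ≠ i3 := fun h => absurd (e.symm.injective h) (by decide)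
      have h12 : i1 ≠ i2 := fun h => absurd (e.symm.injective h) (by decide)
      have h13 : i1 ≠ i3 := fun h => absurd (e.symm.injective h) (by decide)
      have h23 : i2 ≠ i3 := fun h => absurd (e.symm.injective h) (by decide)
      have hcov : ∀ l, l = i0 ∨ l = i1 ∨ l = i2 ∨ l = i3 := by
        intro l
        have hl := e.symm_apply_apply l
        rcases (by decide : ∀ t : Fin 4, t = 0 ∨ t = 1 ∨ t = 2 ∨ t = 3) (e l) with
          h | h | h | h
        · left; rw [← hl, h]
        · right; left; rw [← hl, h]
        · right; right; left; rw [← hl, h]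
        · right; right; right; rw [← hl, h]
      by_cases hb0 : 2 ≤ Fintype.card (V i0)
      · refine aux_k4_big hne hpl.2 i1 i2 i3 i0 h12 h13 h01.symm h23 h02.symm h03.symm ?_ hb0
        intro l; rcases hcov l with rfl | rfl | rfl | rfl <;> tauto
      by_cases hb1 : 2 ≤ Fintype.card (V i1)
      · refine aux_k4_big hne hpl.2 i0 i2 i3 i1 h02 h03 h01 h23 h12.symm h13.symm ?_ hb1
        intro l; rcases hcov l with rfl | rfl | rfl | rfl <;> tauto
      by_cases hb2 : 2 ≤ Fintype.card (V i2)
      · refine aux_k4_big hne hpl.2 i0 i1 i3 i2 h01 h03 h02 h13 h12 h23.symm ?_ hb2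
        intro l; rcases hcov l with rfl | rfl | rfl | rfl <;> tauto
      by_cases hb3 : 2 ≤ Fintype.card (V i3)
      · exact aux_k4_big hne hpl.2 i0 i1 i2 i3 h01 h02 h03 h12 h13 h23 hcov hb3
      have h1all : ∀ l, Fintype.card (V l) = 1 := by
        intro l
        have := hposV l
        rcases hcov l with rfl | rfl | rfl | rfl <;> omega
      exact Or.inr (Or.inl (iso_K4 hk h1all))
  · rintro (h | h | h | h | ⟨n, hn, (h | h | h)⟩)
    · exact isPlanar_of_iso h.some planar_KP4_1112
    · exact isPlanar_of_iso h.some planar_K4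
    · exact isPlanar_of_iso h.some planar_KP3_222
    · exact isPlanar_of_iso h.some planar_KP3_122
    · exact isPlanar_of_iso h.some (planar_KP3_11n n)
    · exact isPlanar_of_iso h.some (planar_K2n n)
    · exact isPlanar_of_iso h.some (planar_K1n n)
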